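/- Let a, b, c be real numbers with 1 + c + 2a ≥ 0, −1 ≤ c ≤ 1, and a² + b² ≤ 1. If 1 − c − 2b ≥ 0, 1 − c + 2b ≥ 0, and 1 + c − 2a ≥ 0, then there exists a 4×4 doubly stochastic matrix whose eigenvalues, counted with algebraic multiplicity, are 1, c, a + ib, a − ib (where i is the imaginary unit). -/
import Mathlib


open Matrix Polynomial

/-- A real square matrix is doubly stochastic if its entries are nonnegative and all of its
row sums and column sums are equal to `1`. -/
def DoublyStochastic {n : ℕ} (D : Matrix (Fin n) (Fin n) ℝ) : Prop :=
  (∀ i j, 0 ≤ D i j) ∧ (∀ i, ∑ j, D i j = 1) ∧ (∀ j, ∑ i, D i j = 1)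

set_option maxHeartbeats 2000000 in
/-- Characteristic polynomial of a `4 × 4` circulant matrix, factored. -/
lemma circ4_charpoly (p q r s : ℝ) :
    (!![p,q,r,s; s,p,q,r; r,s,p,q; q,r,s,p] : Matrix (Fin 4) (Fin 4) ℝ).charpoly
      = (X - C (p+q+r+s)) * (X - C (p-q+r-s)) *
        (X^2 - C (2*(p-r)) * X + C ((p-r)^2+(q-s)^2)) := by
  have e1 : (Fin.succ 2 : Fin 4) = 3 := by decide
  have e2 : (Fin.castSucc 2 : Fin 4) = 2 := by decide
  have e3 : (if (1 : Fin 4) < Fin.succ 2 then (1 : Fin 4) else 2) = 1 := by decide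
  rw [Matrix.charpoly]
  simp [Matrix.det_succ_row_zero, Fin.sum_univ_succ, charmatrix_apply_eq,
    charmatrix_apply_ne, Fin.succAbove, e1, e2, e3, map_ofNat]
  ring

/-- If `a, b, c` are real with `1 + c + 2a ≥ 0`, `-1 ≤ c ≤ 1`, `a² + b² ≤ 1`,
`1 - c - 2b ≥ 0`, `1 - c + 2b ≥ 0` and `1 + c - 2a ≥ 0`, then `1, c, a + ib, a - ib` is
the spectrum of a `4 × 4` doubly stochastic matrix. -/
theorem diep_four_complex (a b c : ℝ)
    (htr : 0 ≤ 1 + c + 2 * a) (hc1 : -1 ≤ c) (hc2 : c ≤ 1)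
    (hab : a ^ 2 + b ^ 2 ≤ 1)
    (h1 : 0 ≤ 1 - c - 2 * b)
    (h2 : 0 ≤ 1 - c + 2 * b)
    (h3 : 0 ≤ 1 + c - 2 * a) :
    ∃ D : Matrix (Fin 4) (Fin 4) ℝ, DoublyStochastic D ∧
      D.charpoly.map (algebraMap ℝ ℂ) =
        (X - C 1) * (X - C (c : ℂ)) *
          (X - C ((a : ℂ) + (b : ℂ) * Complex.I)) *
          (X - C ((a : ℂ) - (b : ℂ) * Complex.I)) := by
  set p : ℝ := (1 + c + 2*a)/4 with hp
  set q : ℝ := (1 - c + 2*b)/4 with hq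
  set r : ℝ := (1 + c - 2*a)/4 with hr
  set s : ℝ := (1 - c - 2*b)/4 with hs
  have hp0 : 0 ≤ p := by rw [hp]; linarith
  have hq0 : 0 ≤ q := by rw [hq]; linarith
  have hr0 : 0 ≤ r := by rw [hr]; linarith
  have hs0 : 0 ≤ s := by rw [hs]; linarith
  have hsum : p + q + r + s = 1 := by rw [hp, hq, hr, hs]; ring
  refine ⟨!![p,q,r,s; s,p,q,r; r,s,p,q; q,r,s,p], ⟨?_, ?_, ?_⟩, ?_⟩
  · intro i j
    fin_cases i <;> fin_cases j <;> simpa using by assumption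
  · intro i
    fin_cases i <;> simp [Fin.sum_univ_four] <;> linarith
  · intro j
    fin_cases j <;> simp [Fin.sum_univ_four] <;> linarith
  · rw [circ4_charpoly]
    have h1 : p + q + r + s = 1 := hsum
    have h2 : p - q + r - s = c := by rw [hp, hq, hr, hs]; ring
    have h3 : 2 * (p - r) = 2 * a := by rw [hp, hr]; ring
    have h4 : (p - r)^2 + (q - s)^2 = a^2 + b^2 := by rw [hp, hq, hr, hs]; ring
    rw [h1, h2, h3, h4]
    have hIsq : ((C Complex.I : ℂ[X]))^2 = -1 := by
      rw [← C_pow, Complex.I_sq, C_neg, C_1]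
    have hI : ((X : ℂ[X]) - C ((a : ℂ) + (b : ℂ) * Complex.I)) *
        (X - C ((a : ℂ) - (b : ℂ) * Complex.I)) =
        X^2 - C (2*(a:ℂ)) * X + C ((a:ℂ)^2 + (b:ℂ)^2) := by
      simp only [C_add, C_sub, C_mul, map_pow, map_ofNat]
      linear_combination (-(C (b:ℂ) ^ 2)) * hIsq
    simp only [Polynomial.map_mul, Polynomial.map_sub, Polynomial.map_add,
      Polynomial.map_pow, Polynomial.map_X, map_C]
    push_cast
    simp only [C_add, C_sub, C_mul, map_pow, map_ofNat, Complex.coe_algebraMap] at hI ⊢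
    linear_combination (X - C 1) * (X - C (c:ℂ)) * hI + 2 * C (b:ℂ)^2 * (X - C 1) * (X - C (c:ℂ)) * hIsq
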